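/- Define ν : ℕ → ℤ by ν(n) = Σ_{r | n} μ(n/r)·2^r. Then for every n ∈ ℕ, ν(n) ≥ 2ⁿ − 2^{n/2 + 1}, where n/2 denotes the real number n/2 (so 2^{n/2+1} = 2·√(2ⁿ)). -/
import Mathlib


open ArithmeticFunction in
/-- number of periodic points of minimal period `n` for a generic quadratic polynomial -/
noncomputable def nuPer (n : ℕ) : ℤ := ∑ r ∈ n.divisors, moebius (n / r) * 2 ^ r

theorem nuPer_lower_bound (n : ℕ) (hn : 0 < n) :
    (nuPer n : ℝ) ≥ 2 ^ n - 2 ^ ((n : ℝ) / 2 + 1) := by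
  have hmem : n ∈ n.divisors := Nat.mem_divisors_self n hn.ne'
  have hsplit : nuPer n = 2 ^ n + ∑ r ∈ n.divisors.erase n, ArithmeticFunction.moebius (n / r) * 2 ^ r := by
    rw [nuPer, ← Finset.add_sum_erase _ _ hmem, Nat.div_self hn]
    simp
  have hsub : n.divisors.erase n ⊆ Finset.range (n / 2 + 1) := by
    intro r hr
    rw [Finset.mem_erase, Nat.mem_divisors] at hr
    obtain ⟨hne, hdvd, _⟩ := hr
    rw [Finset.mem_range, Nat.lt_succ_iff, Nat.le_div_iff_mul_le two_pos]
    obtain ⟨k, hk⟩ := hdvd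
    have hrpos : 0 < r := by
      rcases Nat.eq_zero_or_pos r with h | h
      · subst h; simp at hk; omega
      · exact h
    have hk2 : 2 ≤ k := by
      by_contra h
      interval_cases k <;> omega
    calc r * 2 ≤ r * k := Nat.mul_le_mul_left r hk2
      _ = n := hk.symm
  have hbound : |∑ r ∈ n.divisors.erase n, (ArithmeticFunction.moebius (n / r) : ℤ) * 2 ^ r|
      ≤ 2 ^ (n / 2 + 1) := by
    calc |∑ r ∈ n.divisors.erase n, (ArithmeticFunction.moebius (n / r) : ℤ) * 2 ^ r|
        ≤ ∑ r ∈ n.divisors.erase n, |(ArithmeticFunction.moebius (n / r) : ℤ) * 2 ^ r| :=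
          Finset.abs_sum_le_sum_abs _ _
      _ ≤ ∑ r ∈ n.divisors.erase n, 2 ^ r := by
          apply Finset.sum_le_sum
          intro r hr
          rw [abs_mul, abs_pow, abs_two]
          calc |(ArithmeticFunction.moebius (n / r) : ℤ)| * 2 ^ r
              ≤ 1 * 2 ^ r := by
                gcongr
                exact ArithmeticFunction.abs_moebius_le_one
            _ = 2 ^ r := one_mul _
      _ ≤ ∑ r ∈ Finset.range (n / 2 + 1), 2 ^ r := by
          apply Finset.sum_le_sum_of_subset_of_nonneg hsub
          intro i _ _
          positivity
      _ = 2 ^ (n / 2 + 1) - 1 := by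
          have h := geom_sum_mul (2:ℤ) (n / 2 + 1)
          simpa using h
      _ ≤ 2 ^ (n / 2 + 1) := by omega
  have hE : ((∑ r ∈ n.divisors.erase n, (ArithmeticFunction.moebius (n / r) : ℤ) * 2 ^ r : ℤ) : ℝ)
      ≥ -(2 ^ (n / 2 + 1) : ℝ) := by
    have := (abs_le.mp hbound).1
    have : ((-(2 ^ (n / 2 + 1)) : ℤ) : ℝ) ≤ _ := Int.cast_le.mpr this
    push_cast at this ⊢
    linarith
  have hpow : ((2 : ℝ) ^ (n / 2 + 1)) ≤ 2 ^ ((n : ℝ) / 2 + 1) := by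
    have h1 : ((2 : ℝ) ^ (n / 2 + 1)) = (2 : ℝ) ^ ((n / 2 + 1 : ℕ) : ℝ) := by
      rw [Real.rpow_natCast]
    rw [h1]
    apply Real.rpow_le_rpow_of_exponent_le one_le_two
    push_cast
    have := Nat.cast_div_le (m := n) (n := 2) (α := ℝ)
    push_cast at this
    linarith
  rw [hsplit]
  push_cast at hE ⊢
  linarith
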